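/- For every pair of nonzero integers (v1, v2), the value ML(v1, v2) belongs to the set {1/2} ∪ {s/(2s+1) : s ∈ ℕ, s ≥ 1}; conversely, every element of this set is achieved. Equivalently, S̃(2) = {1/2} ∪ {s/(2s+1) : s ≥ 1}. -/

import Mathlib

/-- Distance from a real number to the nearest integer. -/
noncomputable def distToInt (x : ℝ) : ℝ := ⨅ m : ℤ, |x - m|

/-- Maximum loneliness of a tuple of speeds. -/
noncomputable def ML {n : ℕ} (v : Fin n → ℤ) : ℝ :=
  ⨆ t : ℝ, ⨅ i : Fin n, distToInt (t * v i)

lemma distToInt_bdd (x : ℝ) : BddBelow (Set.range fun m : ℤ => |x - m|) :=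
  ⟨0, by rintro y ⟨m, rfl⟩; positivity⟩

lemma distToInt_eq (x : ℝ) : distToInt x = |x - round x| :=
  le_antisymm (ciInf_le (distToInt_bdd x) (round x)) (le_ciInf fun m => round_le x m)

lemma distToInt_le_half (x : ℝ) : distToInt x ≤ 1 / 2 := by
  rw [distToInt_eq]; exact abs_sub_round x

lemma distToInt_le (x : ℝ) (m : ℤ) : distToInt x ≤ |x - m| :=
  ciInf_le (distToInt_bdd x) m

lemma distToInt_neg (x : ℝ) : distToInt (-x) = distToInt x := by
  have h : ∀ y : ℝ, distToInt (-y) ≤ distToInt y := by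
    intro y
    calc distToInt (-y) ≤ |(-y) - (-(round y : ℤ) : ℤ)| := distToInt_le _ _
    _ = |y - round y| := by push_cast; rw [← abs_neg]; ring_nf
    _ = distToInt y := (distToInt_eq y).symm
  refine le_antisymm (h x) ?_
  simpa using h (-x)

lemma distToInt_add_int (x : ℝ) (m : ℤ) : distToInt (x + m) = distToInt x := by
  have h : ∀ y : ℝ, ∀ k : ℤ, distToInt (y + k) ≤ distToInt y := by
    intro y k
    calc distToInt (y + k) ≤ |(y + k) - (round y + k : ℤ)| := distToInt_le _ _
    _ = |y - round y| := by push_cast; ring_nf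
    _ = distToInt y := (distToInt_eq y).symm
  refine le_antisymm (h x m) ?_
  have := h (x + m) (-m)
  simpa using this

lemma distToInt_of_mem (x : ℝ) (h0 : 0 ≤ x) (h2 : x ≤ 1 / 2) : distToInt x = x := by
  refine le_antisymm ?_ (le_ciInf fun m => ?_)
  · have := distToInt_le x 0
    simpa [abs_of_nonneg h0] using this
  · rcases le_or_gt (m : ℝ) 0 with hm | hm
    · calc x = x - 0 := by ring
      _ ≤ x - m := by linarith
      _ ≤ |x - m| := le_abs_self _
    · have h1 : (1 : ℝ) ≤ m := by exact_mod_cast hm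
      calc x ≤ 1 - x := by linarith
      _ ≤ m - x := by linarith
      _ ≤ |x - m| := by rw [abs_sub_comm]; exact le_abs_self _

lemma iInf_fin2 (f : Fin 2 → ℝ) : (⨅ i : Fin 2, f i) = min (f 0) (f 1) := by
  have hb : BddBelow (Set.range f) := (Set.finite_range f).bddBelow
  refine le_antisymm (le_min (ciInf_le hb 0) (ciInf_le hb 1)) (le_ciInf fun i => ?_)
  fin_cases i
  · exact min_le_left _ _
  · exact min_le_right _ _

-- mixed-sign case of the key upper bound
lemma mixed_case (a b s : ℕ) (ha : 1 ≤ a) (hb : 1 ≤ b) (hab : a + b = 2*s+1)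
    (M : ℤ) (x y : ℝ)
    (hx1 : (s:ℝ)/(2*s+1) < x) (hx2 : x ≤ 1/2)
    (hy1 : (s:ℝ)/(2*s+1) < y) (hy2 : y ≤ 1/2)
    (hM : (a:ℝ)*y + (b:ℝ)*x = M) : False := by
  have hden : (0:ℝ) < 2*s+1 := by positivity
  have habR : (a:ℝ) + b = 2*s+1 := by exact_mod_cast congrArg (Nat.cast : ℕ → ℝ) hab
  have haR : (1:ℝ) ≤ a := by exact_mod_cast ha
  have hbR : (1:ℝ) ≤ b := by exact_mod_cast hb
  have hsum : ((a:ℝ)+b) * ((s:ℝ)/(2*s+1)) = s := by rw [habR]; field_simp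
  have h1 : (s:ℝ) < M := by
    rw [← hM, ← hsum]
    nlinarith [mul_lt_mul_of_pos_left hx1 (show (0:ℝ) < b by linarith),
      mul_lt_mul_of_pos_left hy1 (show (0:ℝ) < a by linarith)]
  have h2 : (M:ℝ) ≤ s + 1/2 := by nlinarith [habR]
  have h1' : (s:ℤ) < M := by exact_mod_cast h1
  have : ((s:ℤ) + 1 : ℝ) ≤ M := by exact_mod_cast h1'
  push_cast at this
  linarith

-- same-sign case of the key upper bound
lemma same_case (a b s : ℕ) (ha : 1 ≤ a) (hb : 1 ≤ b) (hab : a + b = 2*s+1)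
    (N : ℤ) (x y : ℝ)
    (hx1 : (s:ℝ)/(2*s+1) < x) (hx2 : x ≤ 1/2)
    (hy1 : (s:ℝ)/(2*s+1) < y) (hy2 : y ≤ 1/2)
    (hN : (b:ℝ)*x - (a:ℝ)*y = N) : False := by
  have hden : (0:ℝ) < 2*s+1 := by positivity
  have habR : (a:ℝ) + b = 2*s+1 := by exact_mod_cast congrArg (Nat.cast : ℕ → ℝ) hab
  have haR : (1:ℝ) ≤ a := by exact_mod_cast ha
  have hbR : (1:ℝ) ≤ b := by exact_mod_cast hb
  have haU : (a:ℝ) ≤ 2*s := by linarith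
  have hbU : (b:ℝ) ≤ 2*s := by linarith
  have h1 : ((b:ℝ) - a - 1) < 2*N := by
    have key : ((b:ℝ) - 1) * (2*s+1) < 2*b*s := by nlinarith
    have h3 : 2*(b:ℝ)*(s/(2*s+1)) > b - 1 := by
      rw [gt_iff_lt, ← sub_pos]
      have h4 : 2*(b:ℝ)*(s/(2*s+1)) - (b-1) = (2*b*s - (b-1)*(2*s+1))/(2*s+1) := by
        field_simp
      rw [h4]; exact div_pos (by nlinarith) hden
    nlinarith [mul_lt_mul_of_pos_left hx1 (show (0:ℝ) < 2*b by linarith)]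
  have h2 : (2*N:ℝ) < (b:ℝ) - a + 1 := by
    have key : ((a:ℝ) - 1) * (2*s+1) < 2*a*s := by nlinarith
    have h3 : 2*(a:ℝ)*(s/(2*s+1)) > a - 1 := by
      rw [gt_iff_lt, ← sub_pos]
      have h4 : 2*(a:ℝ)*(s/(2*s+1)) - (a-1) = (2*a*s - (a-1)*(2*s+1))/(2*s+1) := by
        field_simp
      rw [h4]; exact div_pos (by nlinarith) hden
    nlinarith [mul_lt_mul_of_pos_left hy1 (show (0:ℝ) < 2*a by linarith)]
  have h1' : (b:ℤ) - a - 1 < 2*N := by exact_mod_cast h1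
  have h2' : 2*N < (b:ℤ) - a + 1 := by exact_mod_cast h2
  omega

lemma key_ub (a b s : ℕ) (ha : 1 ≤ a) (hb : 1 ≤ b) (hab : a + b = 2*s+1) (t : ℝ) :
    min (distToInt (t*(a:ℝ))) (distToInt (t*(b:ℝ))) ≤ (s:ℝ)/(2*s+1) := by
  by_contra hcon
  push_neg at hcon
  set c := (s:ℝ)/(2*s+1) with hc
  have hc0 : 0 ≤ c := by positivity
  set p := round (t*(a:ℝ)) with hp
  set q := round (t*(b:ℝ)) with hq
  set α := t*(a:ℝ) - p with hαdef
  set β := t*(b:ℝ) - q with hβdef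
  have hα1 : c < |α| := by
    have := lt_of_lt_of_le hcon (min_le_left _ _)
    rwa [distToInt_eq] at this
  have hβ1 : c < |β| := by
    have := lt_of_lt_of_le hcon (min_le_right _ _)
    rwa [distToInt_eq] at this
  have hα2 : |α| ≤ 1/2 := abs_sub_round _
  have hβ2 : |β| ≤ 1/2 := abs_sub_round _
  have hrel : (b:ℝ)*α - (a:ℝ)*β = (((a:ℤ)*q - (b:ℤ)*p : ℤ) : ℝ) := by
    rw [hαdef, hβdef]; push_cast; ring
  rcases lt_trichotomy α 0 with hα0 | hα0 | hα0
  · rcases lt_trichotomy β 0 with hβ0 | hβ0 | hβ0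
    · refine same_case a b s ha hb hab (-((a:ℤ)*q - (b:ℤ)*p)) (-α) (-β) ?_ ?_ ?_ ?_ ?_
      · rwa [abs_of_neg hα0] at hα1
      · rw [abs_of_neg hα0] at hα2; linarith
      · rwa [abs_of_neg hβ0] at hβ1
      · rw [abs_of_neg hβ0] at hβ2; linarith
      · push_cast; push_cast at hrel; linarith
    · rw [hβ0, abs_zero] at hβ1; linarith
    · refine mixed_case a b s ha hb hab (-((a:ℤ)*q - (b:ℤ)*p)) (-α) β ?_ ?_ ?_ ?_ ?_
      · rwa [abs_of_neg hα0] at hα1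
      · rw [abs_of_neg hα0] at hα2; linarith
      · rwa [abs_of_pos hβ0] at hβ1
      · rwa [abs_of_pos hβ0] at hβ2
      · push_cast; push_cast at hrel; linarith
  · rw [hα0, abs_zero] at hα1; linarith
  · rcases lt_trichotomy β 0 with hβ0 | hβ0 | hβ0
    · refine mixed_case a b s ha hb hab ((a:ℤ)*q - (b:ℤ)*p) α (-β) ?_ ?_ ?_ ?_ ?_
      · rwa [abs_of_pos hα0] at hα1
      · rwa [abs_of_pos hα0] at hα2
      · rwa [abs_of_neg hβ0] at hβ1
      · rw [abs_of_neg hβ0] at hβ2; linarith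
      · push_cast; push_cast at hrel; linarith
    · rw [hβ0, abs_zero] at hβ1; linarith
    · refine same_case a b s ha hb hab ((a:ℤ)*q - (b:ℤ)*p) α β ?_ ?_ ?_ ?_ hrel
      · rwa [abs_of_pos hα0] at hα1
      · rwa [abs_of_pos hα0] at hα2
      · rwa [abs_of_pos hβ0] at hβ1
      · rwa [abs_of_pos hβ0] at hβ2

lemma exists_t (a b s : ℕ) (hs : 1 ≤ s) (hab : a + b = 2*s+1) (hcop : Nat.Coprime a b) :
    ∃ t : ℝ, distToInt (t*(a:ℝ)) = (s:ℝ)/(2*s+1) ∧ distToInt (t*(b:ℝ)) = (s:ℝ)/(2*s+1) := by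
  obtain ⟨u, w, huw⟩ : ∃ u w : ℤ, (a:ℤ)*u + (2*s+1)*w = 1 := by
    refine ⟨Nat.gcdA a b - Nat.gcdB a b, Nat.gcdB a b, ?_⟩
    have h := Nat.gcd_eq_gcd_ab a b
    rw [hcop] at h
    have hab' : ((a:ℤ) + b) = 2*s+1 := by exact_mod_cast congrArg (Nat.cast : ℕ → ℤ) hab
    linear_combination -h - hab' * Nat.gcdB a b
  have hden : (0:ℝ) < 2*(s:ℝ)+1 := by positivity
  have huwR : (a:ℝ)*u + (2*(s:ℝ)+1)*w = 1 := by exact_mod_cast huw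
  have habR : (a:ℝ) + b = 2*(s:ℝ)+1 := by exact_mod_cast congrArg (Nat.cast : ℕ → ℝ) hab
  have hmem0 : (0:ℝ) ≤ (s:ℝ)/(2*s+1) := by positivity
  have hmem2 : (s:ℝ)/(2*s+1) ≤ 1/2 := by
    rw [div_le_iff₀ hden]; linarith
  refine ⟨((s:ℝ)*u)/(2*(s:ℝ)+1), ?_, ?_⟩
  · have key : ((s:ℝ)*u)/(2*(s:ℝ)+1) * a = (s:ℝ)/(2*s+1) + ((-((s:ℤ)*w) : ℤ):ℝ) := by
      push_cast
      field_simp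
      linear_combination huwR
    rw [key, distToInt_add_int, distToInt_of_mem _ hmem0 hmem2]
  · have key : ((s:ℝ)*u)/(2*(s:ℝ)+1) * b = -((s:ℝ)/(2*s+1)) + (((s:ℤ)*u + (s:ℤ)*w : ℤ):ℝ) := by
      push_cast
      field_simp
      linear_combination (-1:ℝ) * huwR + (u:ℝ)*habR
    rw [key, distToInt_add_int, distToInt_neg, distToInt_of_mem _ hmem0 hmem2]

lemma sup_odd (a b s : ℕ) (ha : 1 ≤ a) (hb : 1 ≤ b) (hs : 1 ≤ s)
    (hab : a + b = 2*s+1) (hcop : Nat.Coprime a b) :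
    (⨆ t : ℝ, min (distToInt (t*(a:ℝ))) (distToInt (t*(b:ℝ)))) = (s:ℝ)/(2*s+1) := by
  obtain ⟨t0, h1, h2⟩ := exists_t a b s hs hab hcop
  refine le_antisymm (ciSup_le fun t => key_ub a b s ha hb hab t) ?_
  have hbdd : BddAbove (Set.range fun t : ℝ =>
      min (distToInt (t*(a:ℝ))) (distToInt (t*(b:ℝ)))) :=
    ⟨(s:ℝ)/(2*s+1), by rintro y ⟨t, rfl⟩; exact key_ub a b s ha hb hab t⟩
  have := le_ciSup hbdd t0
  rwa [h1, h2, min_self] at this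

lemma sup_both_odd (a b : ℕ) (ha : Odd a) (hb : Odd b) :
    (⨆ t : ℝ, min (distToInt (t*(a:ℝ))) (distToInt (t*(b:ℝ)))) = 1/2 := by
  refine le_antisymm
    (ciSup_le fun t => (min_le_left _ _).trans (distToInt_le_half _)) ?_
  have hbdd : BddAbove (Set.range fun t : ℝ =>
      min (distToInt (t*(a:ℝ))) (distToInt (t*(b:ℝ)))) :=
    ⟨1/2, by rintro y ⟨t, rfl⟩; exact (min_le_left _ _).trans (distToInt_le_half _)⟩
  have hhalf : ∀ n : ℕ, Odd n → distToInt ((1/2 : ℝ)*(n:ℝ)) = 1/2 := by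
    intro n hn
    obtain ⟨k, hk⟩ : ∃ k, n = 2*k+1 := by
      have := Nat.odd_iff.mp hn; exact ⟨n/2, by omega⟩
    have : (1/2 : ℝ)*(n:ℝ) = 1/2 + ((k:ℤ):ℝ) := by
      rw [hk]; push_cast; ring
    rw [this, distToInt_add_int, distToInt_of_mem _ (by norm_num) (by norm_num)]
  have := le_ciSup hbdd (1/2 : ℝ)
  rwa [hhalf a ha, hhalf b hb, min_self] at this

lemma distToInt_mul_int (t : ℝ) (m : ℤ) :
    distToInt (t * (m:ℝ)) = distToInt (t * (m.natAbs : ℝ)) := by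
  have habs : ((m.natAbs : ℕ) : ℝ) = |(m:ℝ)| := by rw [Nat.cast_natAbs, Int.cast_abs]
  rcases le_or_gt 0 m with h | h
  · rw [habs, abs_of_nonneg (by exact_mod_cast h)]
  · rw [habs, abs_of_neg (by exact_mod_cast h), mul_neg, distToInt_neg]

lemma sup_rescale (G : ℝ → ℝ) (g : ℝ) (hg : g ≠ 0) :
    (⨆ t : ℝ, G (t * g)) = ⨆ t : ℝ, G t := by
  have hr : (Set.range fun t => G (t * g)) = Set.range G := by
    ext y
    constructor
    · rintro ⟨t, rfl⟩; exact ⟨t * g, rfl⟩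
    · rintro ⟨t, rfl⟩
      exact ⟨t / g, by show G (t / g * g) = G t; rw [div_mul_cancel₀ t hg]⟩
  rw [iSup, iSup, hr]

theorem two_runner_spectrum :
    {d : ℝ | ∃ v : Fin 2 → ℤ, (∀ i, v i ≠ 0) ∧ ML v = d}
      = {1 / 2} ∪ {d : ℝ | ∃ s : ℕ, 1 ≤ s ∧ d = (s : ℝ) / (2 * s + 1)} := by
  ext d
  simp only [Set.mem_setOf_eq, Set.mem_union, Set.mem_singleton_iff]
  constructor
  · rintro ⟨v, hv, rfl⟩
    -- reduce to natural absolute values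
    set n1 := (v 0).natAbs with hn1
    set n2 := (v 1).natAbs with hn2
    have hn1p : 1 ≤ n1 := Nat.one_le_iff_ne_zero.mpr (Int.natAbs_ne_zero.mpr (hv 0))
    have hn2p : 1 ≤ n2 := Nat.one_le_iff_ne_zero.mpr (Int.natAbs_ne_zero.mpr (hv 1))
    set g := Nat.gcd n1 n2 with hg
    have hgpos : 0 < g := Nat.gcd_pos_of_pos_left _ (by omega)
    set a := n1 / g with hadef
    set b := n2 / g with hbdef
    have hga : g * a = n1 := Nat.mul_div_cancel' (Nat.gcd_dvd_left _ _)
    have hgb : g * b = n2 := Nat.mul_div_cancel' (Nat.gcd_dvd_right _ _)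
    have hap : 1 ≤ a := by
      rcases Nat.eq_zero_or_pos a with h | h
      · rw [h, mul_zero] at hga; omega
      · exact h
    have hbp : 1 ≤ b := by
      rcases Nat.eq_zero_or_pos b with h | h
      · rw [h, mul_zero] at hgb; omega
      · exact h
    have hcop : Nat.Coprime a b := Nat.coprime_div_gcd_div_gcd hgpos
    have step1 : ML v = ⨆ t : ℝ,
        min (distToInt (t*(a:ℝ))) (distToInt (t*(b:ℝ))) := by
      have e1 : ∀ t : ℝ, (⨅ i : Fin 2, distToInt (t * (v i : ℝ)))
          = min (distToInt ((t*(g:ℝ))*(a:ℝ))) (distToInt ((t*(g:ℝ))*(b:ℝ))) := by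
        intro t
        rw [iInf_fin2]
        rw [distToInt_mul_int t (v 0), distToInt_mul_int t (v 1)]
        congr 2
        · rw [← hn1, ← hga]; push_cast; ring
        · rw [← hn2, ← hgb]; push_cast; ring
      rw [ML, iSup_congr e1]
      exact sup_rescale (fun u => min (distToInt (u*(a:ℝ))) (distToInt (u*(b:ℝ))))
        (g:ℝ) (by exact_mod_cast hgpos.ne')
    by_cases hodd : Odd a ∧ Odd b
    · left
      rw [step1, sup_both_odd a b hodd.1 hodd.2]
    · right
      have hnb : ¬ (a % 2 = 0 ∧ b % 2 = 0) := by
        rintro ⟨h1, h2⟩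
        have := Nat.dvd_gcd (Nat.dvd_of_mod_eq_zero h1) (Nat.dvd_of_mod_eq_zero h2)
        rw [hcop] at this
        omega
      rw [Nat.odd_iff, Nat.odd_iff] at hodd
      obtain ⟨s, hs1, hs2⟩ : ∃ s, 1 ≤ s ∧ a + b = 2*s+1 :=
        ⟨(a+b)/2, by omega, by omega⟩
      exact ⟨s, hs1, by rw [step1, sup_odd a b s hap hbp hs1 hs2 hcop]⟩
  · rintro (rfl | ⟨s, hs, rfl⟩)
    · refine ⟨fun _ => 1, fun i => one_ne_zero, ?_⟩
      have e1 : ∀ t : ℝ, (⨅ i : Fin 2, distToInt (t * ((1:ℤ) : ℝ)))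
          = min (distToInt (t*((1:ℕ):ℝ))) (distToInt (t*((1:ℕ):ℝ))) := by
        intro t; rw [iInf_fin2]; norm_num
      rw [ML, iSup_congr e1, sup_both_odd 1 1 odd_one odd_one]
    · refine ⟨![(s:ℤ), (s:ℤ)+1], ?_, ?_⟩
      · intro i
        fin_cases i
        · show (s:ℤ) ≠ 0
          exact_mod_cast (by omega : s ≠ 0)
        · show (s:ℤ)+1 ≠ 0
          exact_mod_cast (by omega : (s:ℕ)+1 ≠ 0)
      · have e1 : ∀ t : ℝ, (⨅ i : Fin 2, distToInt (t * ((![(s:ℤ), (s:ℤ)+1]) i : ℝ)))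
            = min (distToInt (t*((s:ℕ):ℝ))) (distToInt (t*((s+1:ℕ):ℝ))) := by
          intro t
          have c0 : ((![(s:ℤ), (s:ℤ)+1]) 0 : ℝ) = ((s:ℕ):ℝ) := by simp
          have c1 : ((![(s:ℤ), (s:ℤ)+1]) 1 : ℝ) = ((s+1:ℕ):ℝ) := by push_cast; simp
          rw [iInf_fin2, c0, c1]
        rw [ML, iSup_congr e1,
          sup_odd s (s+1) s hs (by omega) hs (by omega)
            (by simp [Nat.Coprime, Nat.gcd_comm, Nat.succ_sub_one])]
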